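/- Let A be a K-affinoid (or dagger) algebra and consider the two-term complex A⟨t⟩ →^{∂/∂t} A⟨t⟩ in the pro-system over radii: more precisely, for the pro-object {R_η}_{0<η<1} with R_η = colim_{ρ>1} A_ρ⟨t/η⟩†, the map ∂/∂t : {R_η} → {R_η} is surjective as a map of pro-objects (any f ∈ R_η has an antiderivative in R_{η'} for any η < η' < 1), and its kernel is A. -/

import Mathlib

/-!
STATEMENT 16: Let `A` be a `K`-affinoid (dagger) algebra (char 0) and consider the pro-system
`{R_η}_{0<η<1}`, where `R_η` consists of the power series over `A` converging on the disk of
radius η.  The map `∂/∂t : {R_η} → {R_η}` is surjective as a map of pro-objects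
(any `f ∈ R_η` has an antiderivative one level down, i.e. in `R_{η'}` for any `0 < η' < η`),
and its kernel is `A` (the constants).
-/

open PowerSeries Filter

set_option linter.unusedSectionVars false

section Aux

variable {K A : Type*} [NontriviallyNormedField K] [CharZero K]
    [NormedCommRing A] [NormedAlgebra K A] [Nontrivial A]

lemma smul_one_eq_intCast (z : ℤ) : ((z : K)) • (1 : A) = (z : A) := by
  rw [← Algebra.algebraMap_eq_smul_one, map_intCast]

lemma norm_intCast_K (z : ℤ) : ‖((z : ℤ) : A)‖ = ‖((z : ℤ) : K)‖ * ‖(1 : A)‖ := by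
  rw [← smul_one_eq_intCast (K := K) (A := A) z, norm_smul]

lemma int_ultra (hna : ∀ x y : A, ‖x + y‖ ≤ max ‖x‖ ‖y‖) (x y : ℤ) :
    ‖((x + y : ℤ) : K)‖ ≤ max ‖((x : ℤ) : K)‖ ‖((y : ℤ) : K)‖ := by
  have h1 : (0 : ℝ) < ‖(1 : A)‖ := norm_pos_iff.mpr one_ne_zero
  have h := hna ((x : ℤ) : A) ((y : ℤ) : A)
  rw [← Int.cast_add, norm_intCast_K (K := K) (A := A), norm_intCast_K (K := K) (A := A),
    norm_intCast_K (K := K) (A := A), ← max_mul_of_nonneg _ _ h1.le] at h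
  exact le_of_mul_le_mul_right h h1

lemma int_norm_le_one (hna : ∀ x y : A, ‖x + y‖ ≤ max ‖x‖ ‖y‖) (z : ℤ) :
    ‖((z : ℤ) : K)‖ ≤ 1 := by
  have hnat : ∀ n : ℕ, ‖(((n : ℤ) : ℤ) : K)‖ ≤ 1 := by
    intro n
    induction n with
    | zero => simp
    | succ m ih =>
      have := int_ultra (K := K) (A := A) hna (m : ℤ) 1
      push_cast at this ih ⊢
      simpa using this.trans (by simpa using max_le ih le_rfl)
  rcases Int.natAbs_eq z with h | h
  · rw [h]; exact hnat _
  · rw [h]; push_cast; rw [norm_neg]; simpa using hnat z.natAbs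

end Aux

section Aux2
set_option linter.unusedSectionVars false

variable {K A : Type*} [NontriviallyNormedField K] [CharZero K]
    [NormedCommRing A] [NormedAlgebra K A] [Nontrivial A]

lemma nat_norm_le_one (hna : ∀ x y : A, ‖x + y‖ ≤ max ‖x‖ ‖y‖) (n : ℕ) :
    ‖((n : ℕ) : K)‖ ≤ 1 := by
  have := int_norm_le_one (K := K) (A := A) hna (n : ℤ)
  push_cast at this; exact this

/-- At most one prime has small norm. -/
lemma not_two_small_primes (hna : ∀ x y : A, ‖x + y‖ ≤ max ‖x‖ ‖y‖)
    {p q : ℕ} (pp : p.Prime) (pq : q.Prime) (hpq : p ≠ q)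
    (h1 : ‖((p : ℕ) : K)‖ < 1) (h2 : ‖((q : ℕ) : K)‖ < 1) : False := by
  have hg : Int.gcd (p : ℤ) (q : ℤ) = 1 := by
    rw [Int.gcd_natCast_natCast]
    exact (Nat.coprime_primes pp pq).mpr hpq
  have hb := Int.gcd_eq_gcd_ab (p : ℤ) (q : ℤ)
  rw [hg] at hb
  -- ‖1‖ ≤ max (‖p‖ * ‖a‖) (‖q‖ * ‖b‖) < 1
  have key : (1 : ℝ) ≤ max ‖(((p : ℤ) * Int.gcdA p q : ℤ) : K)‖
      ‖(((q : ℤ) * Int.gcdB p q : ℤ) : K)‖ := by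
    have := int_ultra (K := K) (A := A) hna ((p : ℤ) * Int.gcdA p q) ((q : ℤ) * Int.gcdB p q)
    rw [← hb] at this
    simpa using this
  have bp : ‖(((p : ℤ) * Int.gcdA p q : ℤ) : K)‖ < 1 := by
    rw [Int.cast_mul, norm_mul]
    calc ‖((p : ℤ) : K)‖ * ‖((Int.gcdA p q : ℤ) : K)‖
        ≤ ‖((p : ℤ) : K)‖ * 1 :=
          mul_le_mul_of_nonneg_left (int_norm_le_one (K := K) (A := A) hna _) (norm_nonneg _)
      _ < 1 := by rw [mul_one]; push_cast; exact h1
  have bq : ‖(((q : ℤ) * Int.gcdB p q : ℤ) : K)‖ < 1 := by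
    rw [Int.cast_mul, norm_mul]
    calc ‖((q : ℤ) : K)‖ * ‖((Int.gcdB p q : ℤ) : K)‖
        ≤ ‖((q : ℤ) : K)‖ * 1 :=
          mul_le_mul_of_nonneg_left (int_norm_le_one (K := K) (A := A) hna _) (norm_nonneg _)
      _ < 1 := by rw [mul_one]; push_cast; exact h2
  exact absurd key (max_lt bp bq).not_ge

lemma lower_bound_of_primes {k : ℕ}
    (hk : ∀ q : ℕ, q.Prime → 1 ≤ ‖((q : ℕ) : K)‖ * (q : ℝ) ^ k) :
    ∀ n : ℕ, 1 ≤ n → 1 ≤ ‖((n : ℕ) : K)‖ * (n : ℝ) ^ k := by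
  intro n
  induction n using Nat.strong_induction_on with
  | _ n ih =>
    intro hn1
    rcases eq_or_lt_of_le hn1 with h1 | h2
    · simp [← h1]
    · obtain ⟨q, hq, hd⟩ := Nat.exists_prime_and_dvd (by omega : n ≠ 1)
      obtain ⟨m, rfl⟩ := hd
      have hm1 : 1 ≤ m := by
        rcases Nat.eq_zero_or_pos m with h | h
        · subst h; omega
        · exact h
      have hmlt : m < q * m := by
        have := hq.two_le
        calc m = 1 * m := (one_mul m).symm
          _ < q * m := by have h2 := hq.two_le; exact Nat.mul_lt_mul_of_lt_of_le (by omega) le_rfl (by omega)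
      have ihm := ih m hmlt hm1
      have hqk := hk q hq
      have hprod := mul_le_mul hqk ihm (by norm_num) (by positivity)
      rw [one_mul] at hprod
      calc (1:ℝ) ≤ (‖((q : ℕ) : K)‖ * (q : ℝ) ^ k) * (‖((m : ℕ) : K)‖ * (m : ℝ) ^ k) := hprod
        _ = ‖(((q * m : ℕ)) : K)‖ * ((q * m : ℕ) : ℝ) ^ k := by
            push_cast
            rw [norm_mul, mul_pow]
            ring

lemma exists_pow_bound (hna : ∀ x y : A, ‖x + y‖ ≤ max ‖x‖ ‖y‖) :
    ∃ k : ℕ, ∀ n : ℕ, 1 ≤ n → ‖((n : ℕ) : K)‖⁻¹ ≤ (n : ℝ) ^ k := by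
  have hnorm_pos : ∀ n : ℕ, 1 ≤ n → 0 < ‖((n : ℕ) : K)‖ := by
    intro n hn
    have hne : ((n : ℕ) : K) ≠ 0 := Nat.cast_ne_zero.mpr (by omega)
    exact norm_pos_iff.mpr hne
  suffices h : ∃ k : ℕ, ∀ n : ℕ, 1 ≤ n → 1 ≤ ‖((n : ℕ) : K)‖ * (n : ℝ) ^ k by
    obtain ⟨k, hkk⟩ := h
    refine ⟨k, fun n hn => ?_⟩
    rw [inv_le_iff_one_le_mul₀ (hnorm_pos n hn)]
    linarith [hkk n hn]
  by_cases hp : ∃ p : ℕ, p.Prime ∧ ‖((p : ℕ) : K)‖ < 1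
  · obtain ⟨p, pp, hlt⟩ := hp
    have hppos : 0 < ‖((p : ℕ) : K)‖ := hnorm_pos p pp.one_lt.le
    obtain ⟨k, hk⟩ := pow_unbounded_of_one_lt (‖((p : ℕ) : K)‖⁻¹)
      (by exact_mod_cast pp.one_lt : (1:ℝ) < (p : ℝ))
    refine ⟨k, lower_bound_of_primes (K := K) ?_⟩
    intro q hq
    by_cases hqp : q = p
    · subst hqp
      have h2 := mul_lt_mul_of_pos_left hk hppos
      rw [mul_inv_cancel₀ hppos.ne'] at h2
      exact h2.le
    · have hq1 : ‖((q : ℕ) : K)‖ = 1 := by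
        have hle := nat_norm_le_one (K := K) (A := A) hna q
        rcases lt_or_eq_of_le hle with h | h
        · exact absurd (not_two_small_primes (K := K) (A := A) hna hq pp hqp h hlt) (fun x => x)
        · exact h
      rw [hq1, one_mul]
      exact one_le_pow₀ (by exact_mod_cast hq.one_lt.le)
  · push_neg at hp
    refine ⟨0, lower_bound_of_primes (K := K) ?_⟩
    intro q hq
    have := hp q hq
    simpa using this
end Aux2

/-- Membership in `R_η`: power series over `A` converging on the disk of radius η. -/
def RMem {A : Type*} [NormedCommRing A] (η : ℝ) (f : PowerSeries A) : Prop :=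
  Tendsto (fun j : ℕ => ‖PowerSeries.coeff j f‖ * η ^ j) atTop (nhds 0)

theorem derivative_pro_surjective_kernel_constants
    {K A : Type*} [NontriviallyNormedField K] [CharZero K]
    [NormedCommRing A] [NormedAlgebra K A] [CompleteSpace A] [Nontrivial A]
    (hna : ∀ x y : A, ‖x + y‖ ≤ max ‖x‖ ‖y‖) :
    -- pro-surjectivity of ∂/∂t: antiderivatives exist one level down
    (∀ η : ℝ, 0 < η → η < 1 → ∀ f : PowerSeries A, RMem η f →
      ∀ η' : ℝ, 0 < η' → η' < η →
        ∃ g : PowerSeries A, RMem η' g ∧ PowerSeries.derivativeFun g = f) ∧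
    -- the kernel of ∂/∂t is A (the constant power series)
    (∀ η : ℝ, 0 < η → η < 1 → ∀ f : PowerSeries A, RMem η f →
      PowerSeries.derivativeFun f = 0 → ∃ a : A, f = PowerSeries.C a) := by
  have hsmul : ∀ n : ℕ, (((n : ℕ) : A)) = (((n : ℕ) : K)) • (1 : A) := by
    intro n
    rw [← Algebra.algebraMap_eq_smul_one, map_natCast]
  have hcastne : ∀ n : ℕ, (((n + 1 : ℕ) : K)) ≠ 0 :=
    fun n => Nat.cast_ne_zero.mpr (Nat.succ_ne_zero n)
  constructor
  · -- surjectivity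
    intro η hη0 hη1 f hf η' hη'0 hη'η
    set g : PowerSeries A := PowerSeries.mk (fun j =>
      match j with
      | 0 => 0
      | m + 1 => (((m + 1 : ℕ) : K))⁻¹ • PowerSeries.coeff m f) with hg
    have hgc : ∀ m : ℕ, PowerSeries.coeff (m + 1) g
        = (((m + 1 : ℕ) : K))⁻¹ • PowerSeries.coeff m f := by
      intro m; rw [hg, PowerSeries.coeff_mk]
    refine ⟨g, ?_, ?_⟩
    · -- RMem η' g
      unfold RMem
      rw [← Filter.tendsto_add_atTop_iff_nat 1]
      obtain ⟨k, hk⟩ := exists_pow_bound (K := K) (A := A) hna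
      set r : ℝ := η' / η with hr
      have hr0 : 0 < r := div_pos hη'0 hη0
      have hr1 : r < 1 := (div_lt_one hη0).mpr hη'η
      have hv : Tendsto (fun m : ℕ => ((m + 1 : ℕ) : ℝ) ^ k * r ^ m) atTop (nhds 0) := by
        have h1 : Tendsto (fun n : ℕ => (n : ℝ) ^ k * r ^ n) atTop (nhds 0) :=
          tendsto_pow_const_mul_const_pow_of_lt_one k hr0.le hr1
        have h2 : Tendsto (fun m : ℕ => ((m + 1 : ℕ) : ℝ) ^ k * r ^ (m + 1)) atTop (nhds 0) := by
          have := h1.comp (Filter.tendsto_add_atTop_nat 1)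
          refine this.congr fun m => ?_
          simp only [Function.comp_apply]
        have h3 := h2.const_mul r⁻¹
        rw [mul_zero] at h3
        refine h3.congr (fun m => ?_)
        rw [pow_succ]
        field_simp
      have hvu : Tendsto (fun m : ℕ =>
          η' * ((((m + 1 : ℕ) : ℝ) ^ k * r ^ m) * (‖PowerSeries.coeff m f‖ * η ^ m)))
          atTop (nhds 0) := by
        have := (hv.mul hf).const_mul η'
        simpa using this
      refine squeeze_zero (fun m => by positivity) (fun m => ?_) hvu
      rw [hgc m, norm_smul, norm_inv]
      have hb : ‖(((m + 1 : ℕ) : K))‖⁻¹ ≤ ((m + 1 : ℕ) : ℝ) ^ k := hk (m + 1) (by omega)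
      calc ‖(((m + 1 : ℕ) : K))‖⁻¹ * ‖PowerSeries.coeff m f‖ * η' ^ (m + 1)
          ≤ ((m + 1 : ℕ) : ℝ) ^ k * ‖PowerSeries.coeff m f‖ * η' ^ (m + 1) := by
            gcongr
        _ = η' * ((((m + 1 : ℕ) : ℝ) ^ k * r ^ m) * (‖PowerSeries.coeff m f‖ * η ^ m)) := by
            rw [hr]
            have hη : (η' / η) ^ m * η ^ m = η' ^ m := by
              rw [div_pow, div_mul_cancel₀]
              positivity
            rw [pow_succ, ← hη]
            ring
    · -- derivativeFun g = f
      ext n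
      rw [show PowerSeries.derivativeFun g = PowerSeries.derivative A g from rfl,
        PowerSeries.coeff_derivative, hgc n]
      have h1 : ((n : A) + 1) = (((n + 1 : ℕ) : K)) • (1 : A) := by
        rw [← hsmul (n + 1)]; push_cast; ring
      rw [h1, smul_mul_smul_comm, inv_mul_cancel₀ (hcastne n), mul_one, one_smul]
  · -- kernel
    intro η hη0 hη1 f hf hder
    refine ⟨PowerSeries.constantCoeff f, ?_⟩
    ext n
    cases n with
    | zero => simp [PowerSeries.coeff_zero_eq_constantCoeff]
    | succ m =>
      rw [PowerSeries.coeff_succ_C]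
      have h0 : PowerSeries.coeff m (PowerSeries.derivativeFun f) = 0 := by
        rw [hder, map_zero]
      rw [show PowerSeries.derivativeFun f = PowerSeries.derivative A f from rfl,
        PowerSeries.coeff_derivative] at h0
      have h1 : ((m : A) + 1) = (((m + 1 : ℕ) : K)) • (1 : A) := by
        rw [← hsmul (m + 1)]; push_cast; ring
      rw [h1, mul_smul_comm, mul_one] at h0
      have h2 := congrArg (fun x => (((m + 1 : ℕ) : K))⁻¹ • x) h0
      simp only [smul_smul, inv_mul_cancel₀ (hcastne m), one_smul, smul_zero] at h2
      exact h2
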